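/- Under H₀ (constant parameter), the CUSUM process decomposes exactly as 𝒞ₙ(k) := √n (k/n)(1 − k/n)(U_k − U_k*) = (1/√n)[Σ_{i=1}^k 2g(X_i) − (k/n) Σ_{i=1}^n 2g(X_i)] + Δₙ(k), where Δₙ(k) = (2√n/n²)[((n−k)/(k−1)) Σ_{1≤i<j≤k} f(X_i,X_j) − (k/(n−k−1)) Σ_{k+1≤i<j≤n} f(X_i,X_j)]. -/

import Mathlib

open MeasureTheory ProbabilityTheory Finset

lemma cusum_pair_sum_aux (s : Finset ℕ) (a : ℕ → ℝ) :
    ∑ q ∈ (s ×ˢ s).filter (fun q => q.1 < q.2), (a q.1 + a q.2)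
      = ((s.card : ℝ) - 1) * ∑ i ∈ s, a i := by
  have h1 : ∑ q ∈ (s ×ˢ s).filter (fun q => q.1 < q.2), a q.2
      = ∑ q ∈ (s ×ˢ s).filter (fun q => q.2 < q.1), a q.1 := by
    apply Finset.sum_equiv (Equiv.prodComm ℕ ℕ)
    · intro q
      simp [Finset.mem_filter, Finset.mem_product, and_comm]

    · intro q _
      rfl
  rw [Finset.sum_add_distrib, h1, Finset.sum_filter, Finset.sum_filter,
    ← Finset.sum_add_distrib]
  have h2 : ∀ q ∈ s ×ˢ s,
      ((if q.1 < q.2 then a q.1 else 0) + if q.2 < q.1 then a q.1 else 0)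
        = if q.1 ≠ q.2 then a q.1 else 0 := by
    intro q _
    rcases lt_trichotomy q.1 q.2 with hlt | heq | hgt
    · simp [hlt, not_lt_of_gt hlt, ne_of_lt hlt]
    · simp [heq]
    · simp [hgt, not_lt_of_gt hgt, (ne_of_lt hgt).symm]
  rw [Finset.sum_congr rfl h2, Finset.sum_product]
  have h3 : ∀ i ∈ s, ∑ j ∈ s, (if i ≠ j then a i else 0)
      = (s.card : ℝ) * a i - a i := by
    intro i hi
    have : ∀ j ∈ s, (if i ≠ j then a i else 0) = a i - if i = j then a i else 0 := by
      intro j _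
      by_cases hij : i = j <;> simp [hij]
    rw [Finset.sum_congr rfl this, Finset.sum_sub_distrib, Finset.sum_ite_eq s i (fun _ => a i),
      if_pos hi, Finset.sum_const, nsmul_eq_mul]
  rw [Finset.sum_congr rfl h3, Finset.sum_sub_distrib, ← Finset.mul_sum, sub_one_mul]

/-- Under the null hypothesis, the CUSUM process `𝒞ₙ(k)` decomposes exactly into a
linear bridge of the first-order projections plus the degenerate remainder `Δₙ(k)`. -/
theorem cusum_decomposition
    (p d n : ℕ)
    (Ω : Type) [MeasurableSpace Ω] (μ : Measure Ω) [IsProbabilityMeasure μ]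
    (X : ℕ → Ω → (Fin p → ℝ)) (hXmeas : ∀ i, Measurable (X i))
    (hindep : iIndepFun X μ)
    (hident : ∀ i, IdentDistrib (X i) (X 0) μ μ)
    (h : (Fin p → ℝ) → (Fin p → ℝ) → (Fin d → ℝ))
    (hmeas : Measurable (fun q : (Fin p → ℝ) × (Fin p → ℝ) => h q.1 q.2))
    (hsymm : ∀ x y, h x y = h y x)
    (hint : Integrable (fun ω => h (X 0 ω) (X 1 ω)) μ)
    (θ : Fin d → ℝ) (hθ : θ = ∫ ω, h (X 0 ω) (X 1 ω) ∂μ)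
    (g : (Fin p → ℝ) → (Fin d → ℝ))
    (hg : ∀ x, g x = (∫ y, h x y ∂(Measure.map (X 0) μ)) - θ)
    (f : (Fin p → ℝ) → (Fin p → ℝ) → (Fin d → ℝ))
    (hf : ∀ x y, f x y = h x y - g x - g y - θ)
    (U Ustar C Δ : ℕ → Ω → (Fin d → ℝ))
    (hU : ∀ k ω, U k ω = ((2 : ℝ) / ((k : ℝ) * ((k : ℝ) - 1))) •
      ∑ q ∈ (Finset.range k ×ˢ Finset.range k).filter (fun q => q.1 < q.2),
        h (X q.1 ω) (X q.2 ω))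
    (hUstar : ∀ k ω, Ustar k ω = ((2 : ℝ) / (((n : ℝ) - k) * ((n : ℝ) - k - 1))) •
      ∑ q ∈ ((Finset.Ico k n) ×ˢ (Finset.Ico k n)).filter (fun q => q.1 < q.2),
        h (X q.1 ω) (X q.2 ω))
    (hC : ∀ k ω, C k ω =
      (Real.sqrt n * ((k : ℝ) / n) * (1 - (k : ℝ) / n)) • (U k ω - Ustar k ω))
    (hΔ : ∀ k ω, Δ k ω = (2 * Real.sqrt n / (n : ℝ) ^ 2) •
      ((((n : ℝ) - k) / ((k : ℝ) - 1)) •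
          ∑ q ∈ (Finset.range k ×ˢ Finset.range k).filter (fun q => q.1 < q.2),
            f (X q.1 ω) (X q.2 ω)
        - ((k : ℝ) / ((n : ℝ) - k - 1)) •
          ∑ q ∈ ((Finset.Ico k n) ×ˢ (Finset.Ico k n)).filter (fun q => q.1 < q.2),
            f (X q.1 ω) (X q.2 ω))) :
    ∀ k, 2 ≤ k → k + 2 ≤ n → ∀ ω,
      C k ω = (Real.sqrt n)⁻¹ •
          (∑ i ∈ Finset.range k, (2 : ℝ) • g (X i ω)
            - ((k : ℝ) / n) • ∑ i ∈ Finset.range n, (2 : ℝ) • g (X i ω))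
        + Δ k ω := by
  intro k hk2 hkn ω
  have hkn' : k ≤ n := by omega
  have hK2 : (2:ℝ) ≤ (k:ℝ) := by exact_mod_cast hk2
  have hNk2 : (k:ℝ) + 2 ≤ (n:ℝ) := by exact_mod_cast hkn
  have hk0 : (k:ℝ) ≠ 0 := by positivity
  have hk1 : (k:ℝ) - 1 ≠ 0 := by intro hc; nlinarith
  have hn0 : (n:ℝ) ≠ 0 := by intro hc; nlinarith
  have hnk0 : (n:ℝ) - k ≠ 0 := by intro hc; nlinarith
  have hnk1 : (n:ℝ) - k - 1 ≠ 0 := by intro hc; nlinarith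
  have hnpos : (0:ℝ) < (n:ℝ) := by nlinarith
  have hs : Real.sqrt n ≠ 0 := ne_of_gt (Real.sqrt_pos.mpr hnpos)
  have hs2 : Real.sqrt n * Real.sqrt n = (n:ℝ) := Real.mul_self_sqrt (le_of_lt hnpos)
  have hsinv : (Real.sqrt n)⁻¹ = Real.sqrt n / n := by
    rw [inv_eq_one_div, div_eq_div_iff hs hn0, one_mul, hs2]
  rw [hC, hU, hUstar, hΔ]
  funext j
  simp only [Pi.add_apply, Pi.sub_apply, Pi.smul_apply, Finset.sum_apply, smul_eq_mul]
  have hH : ∀ a b : ℕ, h (X a ω) (X b ω) j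
      = f (X a ω) (X b ω) j + ((g (X a ω) j + θ j / 2) + (g (X b ω) j + θ j / 2)) := by
    intro a b
    have := congrFun (hf (X a ω) (X b ω)) j
    simp only [Pi.sub_apply] at this
    linarith
  have e1 : ∑ q ∈ (Finset.range k ×ˢ Finset.range k).filter (fun q => q.1 < q.2),
        (f (X q.1 ω) (X q.2 ω) j + ((g (X q.1 ω) j + θ j / 2) + (g (X q.2 ω) j + θ j / 2)))
      = (∑ q ∈ (Finset.range k ×ˢ Finset.range k).filter (fun q => q.1 < q.2),
          f (X q.1 ω) (X q.2 ω) j)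
        + ((k:ℝ) - 1) * (∑ i ∈ Finset.range k, g (X i ω) j + (k:ℝ) * (θ j / 2)) := by
    rw [Finset.sum_add_distrib,
      cusum_pair_sum_aux (Finset.range k) (fun i => g (X i ω) j + θ j / 2),
      Finset.sum_add_distrib, Finset.sum_const, Finset.card_range, nsmul_eq_mul]
  have e2 : ∑ q ∈ ((Finset.Ico k n) ×ˢ (Finset.Ico k n)).filter (fun q => q.1 < q.2),
        (f (X q.1 ω) (X q.2 ω) j + ((g (X q.1 ω) j + θ j / 2) + (g (X q.2 ω) j + θ j / 2)))
      = (∑ q ∈ ((Finset.Ico k n) ×ˢ (Finset.Ico k n)).filter (fun q => q.1 < q.2),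
          f (X q.1 ω) (X q.2 ω) j)
        + (((n:ℝ) - k) - 1) * (∑ i ∈ Finset.Ico k n, g (X i ω) j + ((n:ℝ) - k) * (θ j / 2)) := by
    rw [Finset.sum_add_distrib,
      cusum_pair_sum_aux (Finset.Ico k n) (fun i => g (X i ω) j + θ j / 2),
      Finset.sum_add_distrib, Finset.sum_const, Nat.card_Ico, nsmul_eq_mul,
      Nat.cast_sub hkn']
  have e3 : ∑ i ∈ Finset.range n, (2:ℝ) * g (X i ω) j
      = ∑ i ∈ Finset.range k, (2:ℝ) * g (X i ω) j
        + ∑ i ∈ Finset.Ico k n, (2:ℝ) * g (X i ω) j := by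
    rw [Finset.range_eq_Ico, ← Finset.sum_Ico_consecutive _ (Nat.zero_le k) hkn',
      ← Finset.range_eq_Ico]
  simp only [hH]
  rw [e1, e2, e3, hsinv, ← Finset.mul_sum, ← Finset.mul_sum]
  field_simp
  ring
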